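/- Let |X| = n, |Y| = m, |Z| = k with Z ⊆ Y ⊆ X finite nonempty. Then the number of idempotents in T(X,Y,Z) equals Σ_{r=1}^{n−m+k} Σ_{i=max{1, m−n+r}}^{min{k,r}} C(k,i) · C(n−m, r−i) · i^(m−i) · r^(n−m−r+i). -/
import Mathlib

open Finset

private lemma fiber_eq {X : Type*} [Fintype X] [DecidableEq X] (Y Z A B : Finset X)
    (hZY : Z ⊆ Y) (hA : A ⊆ Z) (hB : B ⊆ Yᶜ) :
    ((Finset.univ.filter fun α : X → X => (∀ y ∈ Y, α y ∈ Z) ∧ α ∘ α = α).filter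
        fun α => (Z.filter fun z => α z = z, (Yᶜ).filter fun x => α x = x) = (A, B))
      = Fintype.piFinset (fun x => if x ∈ Y then (if x ∈ A then {x} else A)
          else (if x ∈ B then ({x} : Finset X) else A ∪ B)) := by
  ext α
  simp only [mem_filter, mem_univ, true_and, Fintype.mem_piFinset, Prod.mk.injEq]
  constructor
  · rintro ⟨⟨hY, hid⟩, hfA, hfB⟩
    have hfix : ∀ x, α (α x) = α x := fun x => congrFun hid x
    intro x
    by_cases hxY : x ∈ Y
    · simp only [hxY, if_true]
      by_cases hxA : x ∈ A
      · simp only [hxA, if_true, mem_singleton]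
        have := hfA ▸ hxA
        exact (mem_filter.1 this).2
      · simp only [hxA, if_false]
        rw [← hfA]
        exact mem_filter.2 ⟨hY x hxY, hfix x⟩
    · simp only [hxY, if_false]
      by_cases hxB : x ∈ B
      · simp only [hxB, if_true, mem_singleton]
        have := hfB ▸ hxB
        exact (mem_filter.1 this).2
      · simp only [hxB, if_false, mem_union]
        by_cases hax : α x ∈ Y
        · left
          rw [← hfA]
          refine mem_filter.2 ⟨?_, hfix x⟩
          have := hY _ hax
          rwa [hfix x] at this
        · right
          rw [← hfB]
          exact mem_filter.2 ⟨mem_compl.2 hax, hfix x⟩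
  · intro h
    have hfixAB : ∀ x ∈ A ∪ B, α x = x := by
      intro x hx
      rcases mem_union.1 hx with hx | hx
      · have hxY : x ∈ Y := hZY (hA hx)
        have := h x
        simp only [hxY, if_true, hx, mem_singleton] at this
        exact this
      · have hxY : x ∉ Y := mem_compl.1 (hB hx)
        have := h x
        simp only [hxY, if_false, hx, if_true, mem_singleton] at this
        exact this
    have hmem : ∀ x, α x ∈ A ∪ B := by
      intro x
      have := h x
      by_cases hxY : x ∈ Y
      · simp only [hxY, if_true] at this
        by_cases hxA : x ∈ A
        · simp only [hxA, if_true, mem_singleton] at this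
          rw [this]; exact mem_union_left _ hxA
        · simp only [hxA, if_false] at this
          exact mem_union_left _ this
      · simp only [hxY, if_false] at this
        by_cases hxB : x ∈ B
        · simp only [hxB, if_true, mem_singleton] at this
          rw [this]; exact mem_union_right _ hxB
        · simpa only [hxB, if_false] using this
    refine ⟨⟨?_, ?_⟩, ?_, ?_⟩
    · intro y hy
      have := h y
      simp only [hy, if_true] at this
      by_cases hyA : y ∈ A
      · simp only [hyA, if_true, mem_singleton] at this
        rw [this]; exact hA hyA
      · simp only [hyA, if_false] at this
        exact hA this
    · funext x
      exact hfixAB _ (hmem x)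
    · apply Finset.ext
      intro z
      simp only [mem_filter]
      constructor
      · rintro ⟨hzZ, hzfix⟩
        rcases mem_union.1 (hmem z) with hx | hx
        · rwa [hzfix] at hx
        · exact absurd (hB (hzfix ▸ hx)) (by simp [hZY hzZ])
      · intro hzA
        exact ⟨hA hzA, hfixAB _ (mem_union_left _ hzA)⟩
    · apply Finset.ext
      intro b
      simp only [mem_filter, mem_compl]
      constructor
      · rintro ⟨hbY, hbfix⟩
        rcases mem_union.1 (hmem b) with hx | hx
        · exact absurd (hZY (hA (hbfix ▸ hx))) hbY
        · rwa [hbfix] at hx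
      · intro hbB
        exact ⟨mem_compl.1 (hB hbB), hfixAB _ (mem_union_right _ hbB)⟩

private lemma pi_card {X : Type*} [Fintype X] [DecidableEq X] (Y A B : Finset X)
    (hAY : A ⊆ Y) (hB : B ⊆ Yᶜ) :
    (Fintype.piFinset (fun x => if x ∈ Y then (if x ∈ A then {x} else A)
          else (if x ∈ B then ({x} : Finset X) else A ∪ B))).card
      = A.card ^ (Y.card - A.card) *
          (A.card + B.card) ^ (Fintype.card X - Y.card - B.card) := by
  rw [Fintype.card_piFinset]
  have hdisj : Disjoint A B := by
    refine disjoint_left.2 fun x hxA hxB => ?_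
    exact (mem_compl.1 (hB hxB)) (hAY hxA)
  rw [← prod_mul_prod_compl Y]
  have h1 : ∏ x ∈ Y, (if x ∈ Y then (if x ∈ A then ({x}:Finset X) else A)
      else (if x ∈ B then {x} else A ∪ B)).card = A.card ^ (Y.card - A.card) := by
    rw [← prod_sdiff hAY]
    have e1 : ∏ x ∈ A, (if x ∈ Y then (if x ∈ A then ({x}:Finset X) else A)
        else (if x ∈ B then {x} else A ∪ B)).card = 1 := by
      apply prod_eq_one
      intro x hx
      simp [hAY hx, hx]
    have e2 : ∏ x ∈ Y \ A, (if x ∈ Y then (if x ∈ A then ({x}:Finset X) else A)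
        else (if x ∈ B then {x} else A ∪ B)).card = A.card ^ (Y.card - A.card) := by
      rw [← card_sdiff_of_subset hAY]
      apply prod_eq_pow_card
      intro x hx
      rcases mem_sdiff.1 hx with ⟨h1, h2⟩
      simp [h1, h2]
    rw [e1, e2, mul_one]
  have h2 : ∏ x ∈ Yᶜ, (if x ∈ Y then (if x ∈ A then ({x}:Finset X) else A)
      else (if x ∈ B then {x} else A ∪ B)).card
        = (A.card + B.card) ^ (Fintype.card X - Y.card - B.card) := by
    rw [← prod_sdiff hB]
    have e1 : ∏ x ∈ B, (if x ∈ Y then (if x ∈ A then ({x}:Finset X) else A)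
        else (if x ∈ B then {x} else A ∪ B)).card = 1 := by
      apply prod_eq_one
      intro x hx
      simp [mem_compl.1 (hB hx), hx]
    have e2 : ∏ x ∈ Yᶜ \ B, (if x ∈ Y then (if x ∈ A then ({x}:Finset X) else A)
        else (if x ∈ B then {x} else A ∪ B)).card
          = (A.card + B.card) ^ (Fintype.card X - Y.card - B.card) := by
      have hc : (Yᶜ \ B).card = Fintype.card X - Y.card - B.card := by
        rw [card_sdiff_of_subset hB, card_compl]
      rw [← hc]
      apply prod_eq_pow_card
      intro x hx
      rcases mem_sdiff.1 hx with ⟨h1, h2⟩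
      simp [mem_compl.1 h1, h2, card_union_of_disjoint hdisj]
    rw [e1, e2, mul_one]
  rw [h1, h2]

private lemma pow_sum {X : Type*} [DecidableEq X] (Z W : Finset X) (g : ℕ → ℕ → ℕ) :
    ∑ A ∈ Z.powerset, ∑ B ∈ W.powerset, g A.card B.card
      = ∑ i ∈ range (Z.card + 1), ∑ j ∈ range (W.card + 1),
          Z.card.choose i * (W.card.choose j * g i j) := by
  rw [Finset.sum_powerset]
  refine Finset.sum_congr rfl fun i _ => ?_
  have hstep : ∀ A ∈ Finset.powersetCard i Z,
      ∑ B ∈ W.powerset, g A.card B.card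
        = ∑ j ∈ range (W.card + 1), W.card.choose j * g i j := by
    intro A hA
    have hAc : A.card = i := (Finset.mem_powersetCard.1 hA).2
    rw [Finset.sum_powerset]
    refine Finset.sum_congr rfl fun j _ => ?_
    have : ∀ B ∈ Finset.powersetCard j W, g A.card B.card = g i j := by
      intro B hB
      rw [hAc, (Finset.mem_powersetCard.1 hB).2]
    rw [Finset.sum_congr rfl this, Finset.sum_const, Finset.card_powersetCard,
      smul_eq_mul]
  rw [Finset.sum_congr rfl hstep, Finset.sum_const, Finset.card_powersetCard,
    smul_eq_mul, Finset.mul_sum]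

private lemma reindex (n m k : ℕ) (hm1 : 1 ≤ m) (hmn : m ≤ n) :
    ∑ i ∈ range (k+1), ∑ j ∈ range (n-m+1),
        k.choose i * (n-m).choose j * i ^ (m-i) * (i+j) ^ (n-m-j)
      = ∑ r ∈ Finset.Icc 1 (n - m + k),
          ∑ i ∈ Finset.Icc (max 1 (m + r - n)) (min k r),
            k.choose i * (n - m).choose (r - i) * i ^ (m - i) *
              r ^ (n - m + i - r) := by
  have h0 : ∑ i ∈ Finset.Icc 1 k, ∑ j ∈ range (n-m+1),
      k.choose i * (n-m).choose j * i ^ (m-i) * (i+j) ^ (n-m-j)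
    = ∑ i ∈ range (k+1), ∑ j ∈ range (n-m+1),
      k.choose i * (n-m).choose j * i ^ (m-i) * (i+j) ^ (n-m-j) := by
    apply Finset.sum_subset
    · intro x hx
      simp only [mem_Icc] at hx
      simp only [mem_range]
      omega
    · intro x hx hx'
      simp only [mem_Icc] at hx'
      simp only [mem_range] at hx
      have hx0 : x = 0 := by omega
      subst hx0
      apply Finset.sum_eq_zero
      intro j _
      rw [Nat.zero_pow (by omega)]
      ring
  rw [← h0, Finset.sum_sigma', Finset.sum_sigma']
  refine Finset.sum_nbij' (fun p => ⟨p.1 + p.2, p.1⟩) (fun p => ⟨p.2, p.1 - p.2⟩)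
    ?_ ?_ ?_ ?_ ?_
  · rintro ⟨i, j⟩ hp
    simp only [Finset.mem_sigma, mem_Icc, mem_range] at hp ⊢
    omega
  · rintro ⟨r, i⟩ hp
    simp only [Finset.mem_sigma, mem_Icc, mem_range, le_min_iff, max_le_iff] at hp ⊢
    omega
  · rintro ⟨i, j⟩ hp
    simp only [Finset.mem_sigma, mem_Icc, mem_range] at hp
    show (⟨i, i + j - i⟩ : (_ : ℕ) × ℕ) = ⟨i, j⟩
    have : i + j - i = j := by omega
    rw [this]
  · rintro ⟨r, i⟩ hp
    simp only [Finset.mem_sigma, mem_Icc, mem_range, le_min_iff, max_le_iff] at hp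
    show (⟨i + (r - i), i⟩ : (_ : ℕ) × ℕ) = ⟨r, i⟩
    have : i + (r - i) = r := by omega
    rw [this]
  · rintro ⟨i, j⟩ hp
    simp only [Finset.mem_sigma, mem_Icc, mem_range] at hp
    have e1 : i + j - i = j := by omega
    have e2 : n - m + i - (i + j) = n - m - j := by omega
    rw [e1, e2]

/-- The number of idempotents of T(X,Y,Z) equals
∑_{r=1}^{n−m+k} ∑_{i=max{1,m−n+r}}^{min{k,r}} C(k,i)·C(n−m,r−i)·i^(m−i)·r^(n−m−r+i). -/
theorem stmt_18 {X : Type*} [Fintype X] [DecidableEq X] (Y Z : Finset X)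
    (hZY : Z ⊆ Y) (hZ : Z.Nonempty)
    (n m k : ℕ) (hn : Fintype.card X = n) (hm : Y.card = m) (hk : Z.card = k) :
    Nat.card {α : X → X // (∀ y ∈ Y, α y ∈ Z) ∧ α ∘ α = α} =
      ∑ r ∈ Finset.Icc 1 (n - m + k),
        ∑ i ∈ Finset.Icc (max 1 (m + r - n)) (min k r),
          k.choose i * (n - m).choose (r - i) * i ^ (m - i) *
            r ^ (n - m + i - r) := by
  subst hn hm hk
  have hY : Y.Nonempty := hZ.mono hZY
  have hm1 : 1 ≤ Y.card := card_pos.2 hY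
  have hmn : Y.card ≤ Fintype.card X := Y.card_le_univ
  rw [Nat.card_eq_fintype_card, Fintype.card_subtype]
  rw [Finset.card_eq_sum_card_fiberwise (f := fun α : X → X =>
      (Z.filter fun z => α z = z, (Yᶜ).filter fun x => α x = x))
      (t := Z.powerset ×ˢ (Yᶜ).powerset)
      (fun α _ => Finset.mem_product.2 ⟨Finset.mem_powerset.2 (filter_subset _ _),
        Finset.mem_powerset.2 (filter_subset _ _)⟩)]
  have hfib : ∀ p ∈ Z.powerset ×ˢ (Yᶜ).powerset,
      ((Finset.univ.filter fun α : X → X => (∀ y ∈ Y, α y ∈ Z) ∧ α ∘ α = α).filter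
          fun α => (Z.filter fun z => α z = z, (Yᶜ).filter fun x => α x = x) = p).card
        = p.1.card ^ (Y.card - p.1.card) *
            (p.1.card + p.2.card) ^ (Fintype.card X - Y.card - p.2.card) := by
    rintro ⟨A, B⟩ hp
    rcases Finset.mem_product.1 hp with ⟨hA, hB⟩
    rw [fiber_eq Y Z A B hZY (Finset.mem_powerset.1 hA) (Finset.mem_powerset.1 hB)]
    exact pi_card Y A B ((Finset.mem_powerset.1 hA).trans hZY) (Finset.mem_powerset.1 hB)
  rw [Finset.sum_congr rfl hfib, Finset.sum_product,
    pow_sum Z Yᶜ (fun i j => i ^ (Y.card - i) * (i + j) ^ (Fintype.card X - Y.card - j))]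
  rw [card_compl]
  rw [← reindex (Fintype.card X) Y.card Z.card hm1 hmn]
  refine Finset.sum_congr rfl fun i _ => Finset.sum_congr rfl fun j _ => by ring
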